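/- Let (C, R, 𝓡) be a big-step semantics satisfying the boundedness condition BP and 𝓡^? its partial-evaluation semantics. For each sequence (τ_n)_{n∈ℕ} of finite proof trees in 𝓡^? that is strictly increasing with respect to the order ⊑, the least upper bound ⊔ τ_n is an infinite, well-formed proof tree. -/

import Mathlib

namespace BigStepMeta

universe u

/-- A judgment `c ⇒ r`: a configuration together with a result. -/
structure Judg (C : Type u) where
  conf : C
  res  : C

/-- A big-step rule: a conclusion configuration plus a nonempty finite list of premises.
The last premise is the continuation; the conclusion judgment is `concl ⇒ (last premise).res`. -/
structure Rule (C : Type u) where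
  concl : C
  premises : List (Judg C)
  ne : premises ≠ []

/-- The last premise (continuation) of a rule. -/
def Rule.lastJ {C : Type u} (ρ : Rule C) : Judg C := ρ.premises.getLast ρ.ne

/-- A big-step semantics `(C, R, 𝓡)`: configurations `C`, results `R ⊆ C`, rules `𝓡`. -/
structure BigStep (C : Type u) where
  R : Set C
  Rules : Set (Rule C)
  concl_not_res : ∀ ρ ∈ Rules, ρ.concl ∉ R
  prem_res : ∀ ρ ∈ Rules, ∀ j ∈ ρ.premises, j.res ∈ R

variable {C : Type u}

/-- Condition BP: the number of premises of rules is bounded. -/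
def BigStep.BP (S : BigStep C) : Prop :=
  ∃ b : ℕ, ∀ ρ ∈ S.Rules, ρ.premises.length ≤ b

/-- Inductive derivability `⊢_𝓡 c ⇒ r`: there is a finite proof tree.
For each result `r ∈ R` there is an implicit axiom `r ⇒ r`. -/
inductive Derives (S : BigStep C) : C → C → Prop
  | ax {r : C} : r ∈ S.R → Derives S r r
  | rule {ρ : Rule C} : ρ ∈ S.Rules →
      (∀ j ∈ ρ.premises, Derives S j.conf j.res) →
      Derives S ρ.concl ρ.lastJ.res

/-! ## Traces -/

/-- A finite or infinite trace of configurations. -/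
inductive Trace (C : Type u) where
  | fin : List C → Trace C
  | inf : (ℕ → C) → Trace C

/-- Concatenation of a finite list with an infinite sequence. -/
def appendInf (l : List C) (f : ℕ → C) : ℕ → C :=
  fun n => if h : n < l.length then l.get ⟨n, h⟩ else f (n - l.length)

/-- The finite trace `t_k · R(j_k)` associated to a premise and a chosen finite trace. -/
def finPart (p : Judg C × List C) : List C := p.2 ++ [p.1.res]

/-- The rule instances of the trace semantics `𝓡^tr`: a conclusion `c ⇒ t`
together with its list of premises. -/
inductive TrRule (S : BigStep C) : C → Trace C → List (C × Trace C) → Prop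
  | ax {r : C} : r ∈ S.R → TrRule S r (.fin [r]) []
  | intro {ρ : Rule C} {ts : List (List C)} :
      ρ ∈ S.Rules → ts.length = ρ.premises.length →
      TrRule S ρ.concl
        (.fin (ρ.concl :: ((ρ.premises.zip ts).map finPart).flatten))
        ((ρ.premises.zip ts).map (fun p => (p.1.conf, Trace.fin (finPart p))))
  | div {ρ : Rule C} {pre rest : List (Judg C)} {j : Judg C} {ts : List (List C)} {f : ℕ → C} :
      ρ ∈ S.Rules → ρ.premises = pre ++ j :: rest →
      ts.length = pre.length →
      TrRule S ρ.concl
        (.inf (appendInf (ρ.concl :: ((pre.zip ts).map finPart).flatten) f))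
        (((pre.zip ts).map (fun p => (p.1.conf, Trace.fin (finPart p)))) ++
          [(j.conf, Trace.inf f)])

/-- `⊢_{𝓡^tr} c ⇒ t` by a finite derivation (inductive interpretation of `𝓡^tr`). -/
inductive TrDerivesFin (S : BigStep C) : C → Trace C → Prop
  | step {c : C} {t : Trace C} {prems : List (C × Trace C)} :
      TrRule S c t prems →
      (∀ p ∈ prems, TrDerivesFin S p.1 p.2) →
      TrDerivesFin S c t

/-- `⊢_{𝓡^tr} c ⇒ t`: coinductive interpretation of `𝓡^tr`, i.e. existence of a possibly
infinite proof tree, expressed as membership in some backward-closed (consistent) relation. -/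
def TrDerives (S : BigStep C) (c : C) (t : Trace C) : Prop :=
  ∃ X : C → Trace C → Prop,
    (∀ c' t', X c' t' → ∃ prems, TrRule S c' t' prems ∧ ∀ p ∈ prems, X p.1 p.2) ∧
    X c t

/-! ## Wrong -/

/-- There is a rule with conclusion configuration `c`, first premises `pre`, whose next
premise has configuration `c'` and result `r` (i.e. a rule `ρ' ∼ᵢ ρ` with `R(ρ', i) = r`). -/
def HasContinuation (S : BigStep C) (c : C) (pre : List (Judg C)) (c' r : C) : Prop :=
  ∃ ρ' ∈ S.Rules, ∃ j' : Judg C, ∃ rest' : List (Judg C),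
    ρ'.premises = pre ++ j' :: rest' ∧ ρ'.concl = c ∧ j'.conf = c' ∧ j'.res = r

/-- Derivability in the wrong semantics `𝓡^wr`; `none` plays the role of `wrong`. -/
inductive DerivesW (S : BigStep C) : C → Option C → Prop
  | ax {r : C} : r ∈ S.R → DerivesW S r (some r)
  | rule {ρ : Rule C} : ρ ∈ S.Rules →
      (∀ j ∈ ρ.premises, DerivesW S j.conf (some j.res)) →
      DerivesW S ρ.concl (some ρ.lastJ.res)
  | wrong_intro {ρ : Rule C} {pre rest : List (Judg C)} {j : Judg C} {r : C} :
      ρ ∈ S.Rules → ρ.premises = pre ++ j :: rest → r ∈ S.R →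
      ¬ HasContinuation S ρ.concl pre j.conf r →
      (∀ j' ∈ pre, DerivesW S j'.conf (some j'.res)) →
      DerivesW S j.conf (some r) →
      DerivesW S ρ.concl none
  | wrong_ax {c : C} : c ∉ S.R → (¬ ∃ ρ ∈ S.Rules, ρ.concl = c) →
      DerivesW S c none
  | wrong_prop {ρ : Rule C} {pre rest : List (Judg C)} {j : Judg C} :
      ρ ∈ S.Rules → ρ.premises = pre ++ j :: rest →
      (∀ j' ∈ pre, DerivesW S j'.conf (some j'.res)) →
      DerivesW S j.conf none →
      DerivesW S ρ.concl none

/-! ## Indexed predicates and soundness conditions -/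

variable {I : Type u}

/-- `c ∈ Π`, i.e. `c ∈ Π_ι` for some index `ι`. -/
def InPred (P : I → Set C) (c : C) : Prop := ∃ i : I, c ∈ P i

/-- Condition S1 (local preservation). -/
def LocalPres (S : BigStep C) (P : I → Set C) : Prop :=
  ∀ ρ ∈ S.Rules, ∀ i : I, ρ.concl ∈ P i →
    ∃ f : ℕ → I, f (ρ.premises.length - 1) = i ∧
      ∀ (k : ℕ) (hk : k < ρ.premises.length),
        (∀ (h : ℕ) (hh : h < k), (ρ.premises.get ⟨h, hh.trans hk⟩).res ∈ P (f h)) →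
        (ρ.premises.get ⟨k, hk⟩).conf ∈ P (f k)

/-- Condition S2 (∃-progress). -/
def ExProgress (S : BigStep C) (P : I → Set C) : Prop :=
  ∀ c : C, InPred P c → c ∉ S.R → ∃ ρ ∈ S.Rules, ρ.concl = c

/-- Condition S3 (∀-progress). -/
def AllProgress (S : BigStep C) (P : I → Set C) : Prop :=
  ∀ ρ ∈ S.Rules, InPred P ρ.concl →
    ∀ (pre : List (Judg C)) (j : Judg C) (rest : List (Judg C)),
      ρ.premises = pre ++ j :: rest →
      (∀ j' ∈ pre, Derives S j'.conf j'.res) →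
      ∀ r ∈ S.R, Derives S j.conf r →
      HasContinuation S ρ.concl pre j.conf r

/-- Condition S4 (progress-may). -/
def ProgressMay (S : BigStep C) (P : I → Set C) : Prop :=
  ∀ c : C, InPred P c → c ∉ S.R →
    ∃ ρ ∈ S.Rules, ρ.concl = c ∧
      ∀ (pre : List (Judg C)) (j : Judg C) (rest : List (Judg C)),
        ρ.premises = pre ++ j :: rest →
        (∀ j' ∈ pre, Derives S j'.conf j'.res) →
        ¬ Derives S j.conf j.res →
        ¬ ∃ r : C, Derives S j.conf r

/-! ## Partial evaluation: the inference system `𝓡^?` -/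

/-- The rule instances of the partial-evaluation semantics `𝓡^?`; `none` plays the role
of the unknown result `?`. -/
inductive URule (S : BigStep C) : C → Option C → List (C × Option C) → Prop
  | ax {r : C} : r ∈ S.R → URule S r (some r) []
  | rule {ρ : Rule C} : ρ ∈ S.Rules →
      URule S ρ.concl (some ρ.lastJ.res) (ρ.premises.map (fun j => (j.conf, some j.res)))
  | unk_ax {c : C} : URule S c none []
  | unk {ρ : Rule C} {pre rest : List (Judg C)} {j : Judg C} {r : C} :
      ρ ∈ S.Rules → ρ.premises = pre ++ j :: rest → r ∈ S.R →
      URule S ρ.concl none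
        (pre.map (fun j' => (j'.conf, some j'.res)) ++ [(j.conf, some r)])
  | prop {ρ : Rule C} {pre rest : List (Judg C)} {j : Judg C} :
      ρ ∈ S.Rules → ρ.premises = pre ++ j :: rest →
      URule S ρ.concl none
        (pre.map (fun j' => (j'.conf, some j'.res)) ++ [(j.conf, none)])

/-! ## Possibly infinite trees as partial functions -/

/-- A (possibly infinite) tree labelled by judgments `c ⇒ u`, `u ∈ R ∪ {?}`, given as a
partial function on addresses (lists of positive naturals), with nonempty domain closed
under parents and left siblings. -/
structure PTree (C : Type u) where
  label : List ℕ+ → Option (C × Option C)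
  root_def : label [] ≠ none
  closed : ∀ (α : List ℕ+) (n : ℕ+), label (α ++ [n]) ≠ none → label α ≠ none
  siblings : ∀ (α : List ℕ+) (n k : ℕ+), k ≤ n →
    label (α ++ [n]) ≠ none → label (α ++ [k]) ≠ none

/-- `τ` is a proof tree in `𝓡^?`: at each node, the children are exactly the premises
of a rule of `𝓡^?` with the node's judgment as conclusion. -/
def PTree.IsProofTree (S : BigStep C) (τ : PTree C) : Prop :=
  ∀ (α : List ℕ+) (p : C × Option C), τ.label α = some p →
    ∃ prems : List (C × Option C), URule S p.1 p.2 prems ∧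
      ∀ n : ℕ+, τ.label (α ++ [n]) = prems[(n : ℕ) - 1]?

/-- The order `τ ⊑ τ'` on trees: larger domain, same configurations, and equal subtrees
at nodes whose result is already known (in `R`). -/
def PTree.LE (τ τ' : PTree C) : Prop :=
  ∀ (α : List ℕ+) (p : C × Option C), τ.label α = some p →
    ∃ p' : C × Option C, τ'.label α = some p' ∧ p.1 = p'.1 ∧
      (p.2 ≠ none → ∀ β : List ℕ+, τ.label (α ++ β) = τ'.label (α ++ β))

/-- A tree is finite if its domain is finite. -/
def PTree.Finite (τ : PTree C) : Prop := {α : List ℕ+ | τ.label α ≠ none}.Finite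

/-- A (typically infinite) proof tree is well-formed if at every level there is a node
labelled by an incomplete judgment, and subtrees rooted at complete judgments are finite. -/
def PTree.WellFormed (τ : PTree C) : Prop :=
  (∀ n : ℕ, ∃ (α : List ℕ+) (c : C), α.length = n ∧ τ.label α = some (c, none)) ∧
  (∀ (α : List ℕ+) (c r : C), τ.label α = some (c, some r) →
    {β : List ℕ+ | τ.label (α ++ β) ≠ none}.Finite)

/-! ## Finite proof trees and the reduction relation -/

/-- Finite trees labelled by judgments `c ⇒ u`, `u ∈ R ∪ {?}` (with `none` playing `?`). -/
inductive FTree (C : Type u) where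
  | node : C → Option C → List (FTree C) → FTree C

/-- The judgment at the root of a finite tree. -/
def FTree.judg : FTree C → C × Option C
  | .node c u _ => (c, u)

/-- `τ` is a finite proof tree in the partial-evaluation semantics `𝓡^?`. -/
inductive IsFPT (S : BigStep C) : FTree C → Prop
  | mk {c : C} {u : Option C} {l : List (FTree C)} :
      URule S c u (l.map FTree.judg) →
      (∀ τ ∈ l, IsFPT S τ) →
      IsFPT S (.node c u l)

/-- A finite proof tree is complete if all its judgments have results in `R`. -/
inductive FTree.Complete (S : BigStep C) : FTree C → Prop
  | mk {c : C} {r : C} {l : List (FTree C)} :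
      r ∈ S.R →
      (∀ τ ∈ l, FTree.Complete S τ) →
      FTree.Complete S (.node c (some r) l)

/-- The order `τ ⊑ τ'` on finite trees. -/
inductive FTreeLE : FTree C → FTree C → Prop
  | done {c r : C} {l : List (FTree C)} :
      FTreeLE (.node c (some r) l) (.node c (some r) l)
  | step {c : C} {u' : Option C} {l l₁ l₂ : List (FTree C)} :
      l.length = l₁.length →
      (∀ p ∈ l.zip l₁, FTreeLE p.1 p.2) →
      FTreeLE (.node c none l) (.node c u' (l₁ ++ l₂))

/-- The one-step reduction relation `⇝` on finite proof trees in `𝓡^?`. -/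
inductive Red (S : BigStep C) : FTree C → FTree C → Prop
  /-- The axiom `r ⇒ ?` (with `r ∈ R`) steps to the axiom `r ⇒ r`. -/
  | res {r : C} : r ∈ S.R → Red S (.node r none []) (.node r (some r) [])
  /-- The axiom `c ⇒ ?` steps, for a rule `ρ` with conclusion configuration `c`,
  to the tree applying `prop(ρ,1,?)` to the leaf `c' ⇒ ?`, `c'` the first premise
  configuration of `ρ`. -/
  | start {ρ : Rule C} {j : Judg C} {rest : List (Judg C)} :
      ρ ∈ S.Rules → ρ.premises = j :: rest →
      Red S (.node ρ.concl none []) (.node ρ.concl none [.node j.conf none []])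
  /-- A tree with root `c ⇒ ?` whose children are the first `i` premises of some
  `ρ' ∈ 𝓡` (with `#ρ' = i`, last premise result `r`) steps to the same tree with
  root `c ⇒ r`. -/
  | complete {ρ' : Rule C} {pre : List (Judg C)} {j' : Judg C} {l : List (FTree C)} :
      ρ' ∈ S.Rules → ρ'.premises = pre ++ [j'] →
      l.map FTree.judg = pre.map (fun j => (j.conf, some j.res)) ++ [(j'.conf, some j'.res)] →
      Red S (.node ρ'.concl none l) (.node ρ'.concl (some j'.res) l)
  /-- A tree with root `c ⇒ ?` whose children are the first `i` premises of some
  `ρ' ∈ 𝓡` having an `(i+1)`-th premise steps by adding the leaf for that premise's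
  configuration. -/
  | next {ρ' : Rule C} {pre rest : List (Judg C)} {j' j'' : Judg C} {l : List (FTree C)} :
      ρ' ∈ S.Rules → ρ'.premises = pre ++ j' :: j'' :: rest →
      l.map FTree.judg = pre.map (fun j => (j.conf, some j.res)) ++ [(j'.conf, some j'.res)] →
      Red S (.node ρ'.concl none l) (.node ρ'.concl none (l ++ [.node j''.conf none []]))
  /-- Propagation: a step of the last child is propagated. -/
  | inner {c : C} {l : List (FTree C)} {τ τ' : FTree C} :
      Red S τ τ' →
      Red S (.node c none (l ++ [τ])) (.node c none (l ++ [τ']))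


section Lub

theorem ptree_ext {τ₁ τ₂ : PTree C} (h : τ₁.label = τ₂.label) : τ₁ = τ₂ := by
  cases τ₁; cases τ₂; cases h; rfl

theorem ptree_le_refl (τ : PTree C) : τ.LE τ :=
  fun _ p h => ⟨p, h, rfl, fun _ _ => rfl⟩

theorem ptree_le_trans {τ₁ τ₂ τ₃ : PTree C} (h1 : τ₁.LE τ₂) (h2 : τ₂.LE τ₃) : τ₁.LE τ₃ := by
  intro α p hp
  obtain ⟨q, hq, hcq, hfq⟩ := h1 α p hp
  obtain ⟨w, hw, hcw, hfw⟩ := h2 α q hq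
  refine ⟨w, hw, hcq.trans hcw, fun hne β => ?_⟩
  have h0 := hfq hne []
  rw [List.append_nil, hp, hq] at h0
  obtain rfl := Option.some.inj h0
  exact (hfq hne β).trans (hfw hne β)

variable {τs : ℕ → PTree C}

theorem le_chain (hm : ∀ n, (τs n).LE (τs (n + 1))) {n m : ℕ} (h : n ≤ m) :
    (τs n).LE (τs m) := by
  induction m, h using Nat.le_induction with
  | base => exact ptree_le_refl _
  | succ m _ ih => exact ptree_le_trans ih (hm m)

theorem frozen (hm : ∀ n, (τs n).LE (τs (n + 1))) {n m : ℕ} (h : n ≤ m)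
    {α : List ℕ+} {p : C × Option C} (hp : (τs n).label α = some p) (hne : p.2 ≠ none) :
    ∀ β, (τs m).label (α ++ β) = (τs n).label (α ++ β) := by
  obtain ⟨q, hq, hc, hf⟩ := le_chain hm h α p hp
  exact fun β => (hf hne β).symm

theorem conf_agree (hm : ∀ n, (τs n).LE (τs (n + 1))) {n m : ℕ} {α : List ℕ+}
    {p q : C × Option C}
    (hp : (τs n).label α = some p) (hq : (τs m).label α = some q) : p.1 = q.1 := by
  rcases le_total n m with h | h
  · obtain ⟨q', hq', hc, -⟩ := le_chain hm h α p hp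
    rw [hq] at hq'; cases Option.some.inj hq'; exact hc
  · obtain ⟨p', hp', hc, -⟩ := le_chain hm h α q hq
    rw [hp] at hp'; cases Option.some.inj hp'; exact hc.symm

open Classical in
/-- The pointwise limit of the labels of an increasing sequence of trees. -/
noncomputable def ulabel (τs : ℕ → PTree C) (α : List ℕ+) : Option (C × Option C) :=
  if h2 : ∃ (n : ℕ) (p : C × Option C), (τs n).label α = some p ∧ p.2 ≠ none then
    some h2.choose_spec.choose
  else if h1 : ∃ (n : ℕ) (p : C × Option C), (τs n).label α = some p then
    some (h1.choose_spec.choose.1, none)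
  else none

theorem ulabel_exists {α : List ℕ+} {p : C × Option C} (h : ulabel τs α = some p) :
    ∃ n, (τs n).label α = some p := by
  unfold ulabel at h
  split_ifs at h with h2 h1
  · obtain rfl := Option.some.inj h
    exact ⟨h2.choose, h2.choose_spec.choose_spec.1⟩
  · obtain rfl := Option.some.inj h
    have hq := h1.choose_spec.choose_spec
    have hq2 : h1.choose_spec.choose.2 = none := by
      by_contra hne
      exact h2 ⟨h1.choose, h1.choose_spec.choose, hq, hne⟩
    exact ⟨h1.choose, hq.trans (congrArg some (Prod.ext rfl hq2))⟩

theorem ulabel_ne_none {α : List ℕ+} {n : ℕ} (h : (τs n).label α ≠ none) :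
    ulabel τs α ≠ none := by
  obtain ⟨p, hp⟩ := Option.ne_none_iff_exists'.mp h
  unfold ulabel
  split_ifs with h2 h1
  · simp
  · simp
  · exact absurd ⟨n, p, hp⟩ h1

theorem ulabel_res_none {α : List ℕ+} {c : C} (h : ulabel τs α = some (c, none)) :
    ∀ (n : ℕ) (p : C × Option C), (τs n).label α = some p → p.2 = none := by
  intro n p hp
  by_contra hne
  have h2 : ∃ (n : ℕ) (p : C × Option C), (τs n).label α = some p ∧ p.2 ≠ none :=
    ⟨n, p, hp, hne⟩
  unfold ulabel at h
  rw [dif_pos h2] at h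
  have hne2 := h2.choose_spec.choose_spec.2
  rw [Option.some.inj h] at hne2
  exact hne2 rfl

/-- The limit tree of an increasing sequence. -/
noncomputable def Utree (τs : ℕ → PTree C) (hr : (τs 0).label [] ≠ none) : PTree C where
  label := ulabel τs
  root_def := ulabel_ne_none hr
  closed := by
    intro α k h
    obtain ⟨p, hp⟩ := Option.ne_none_iff_exists'.mp h
    obtain ⟨m, hmp⟩ := ulabel_exists hp
    exact ulabel_ne_none ((τs m).closed α k (by rw [hmp]; simp))
  siblings := by
    intro α k k' hk h
    obtain ⟨p, hp⟩ := Option.ne_none_iff_exists'.mp h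
    obtain ⟨m, hmp⟩ := ulabel_exists hp
    exact ulabel_ne_none ((τs m).siblings α k k' hk (by rw [hmp]; simp))

theorem Utree_ub (hm : ∀ n, (τs n).LE (τs (n + 1))) (hr : (τs 0).label [] ≠ none) (n : ℕ) :
    (τs n).LE (Utree τs hr) := by
  intro α p hp
  have hne : ulabel τs α ≠ none := ulabel_ne_none (by rw [hp]; simp)
  obtain ⟨q, hq⟩ := Option.ne_none_iff_exists'.mp hne
  obtain ⟨m, hmq⟩ := ulabel_exists hq
  refine ⟨q, hq, conf_agree hm hp hmq, ?_⟩
  intro hpne β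
  show (τs n).label (α ++ β) = ulabel τs (α ++ β)
  rcases h' : ulabel τs (α ++ β) with _ | q'
  · rcases Option.eq_none_or_eq_some ((τs n).label (α ++ β)) with h0 | ⟨p', hp'⟩
    · exact h0
    · exact absurd h' (ulabel_ne_none (by rw [hp']; simp))
  · obtain ⟨m', hm'q⟩ := ulabel_exists h'
    rcases le_total n m' with hle | hle
    · rw [← frozen hm hle hp hpne β]
      exact hm'q
    · rcases hq'2 : q'.2 with _ | r'
      · obtain ⟨p'', hp'', hc'', -⟩ := le_chain hm hle (α ++ β) q' hm'q
        have hq'none : ulabel τs (α ++ β) = some (q'.1, none) := by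
          rw [h']; exact congrArg some (Prod.ext rfl hq'2)
        have hpn : p''.2 = none := ulabel_res_none hq'none n p'' hp''
        rw [hp'']
        exact congrArg some (Prod.ext hc''.symm (hpn.trans hq'2.symm))
      · have := frozen hm hle hm'q (by rw [hq'2]; simp) []
        rw [List.append_nil] at this
        rw [this, hm'q]

theorem urule_len {S : BigStep C} {b : ℕ} (hb : ∀ ρ ∈ S.Rules, ρ.premises.length ≤ b)
    {c : C} {u : Option C} {prems : List (C × Option C)} (h : URule S c u prems) :
    prems.length ≤ b := by
  cases h with
  | ax _ => simp
  | rule hρ => simpa using hb _ hρ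
  | unk_ax => simp
  | @unk ρ pre rest j r hρ hprem _ =>
    have hl := hb _ hρ
    rw [hprem] at hl
    simp only [List.length_append, List.length_cons, List.length_map,
      List.length_nil] at hl ⊢
    omega
  | @prop ρ pre rest j hρ hprem =>
    have hl := hb _ hρ
    rw [hprem] at hl
    simp only [List.length_append, List.length_cons, List.length_map,
      List.length_nil] at hl ⊢
    omega

theorem prefix_ne_none (τ : PTree C) :
    ∀ (β α : List ℕ+), τ.label (α ++ β) ≠ none → τ.label α ≠ none := by
  intro β
  induction β using List.reverseRecOn with
  | nil => intro α h; simpa using h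
  | append_singleton β k ih =>
    intro α h
    rw [← List.append_assoc] at h
    exact ih α (τ.closed (α ++ β) k h)

theorem finite_bounded_lists (b n : ℕ) :
    {α : List ℕ+ | (∀ k ∈ α, (k : ℕ) ≤ b) ∧ α.length ≤ n}.Finite := by
  classical
  have hfin : {l : List (Fin (b + 1)) | l.length ≤ n}.Finite := List.finite_length_le _ n
  have himg := hfin.image (List.map (fun i : Fin (b + 1) => (⟨(i : ℕ) + 1, Nat.succ_pos _⟩ : ℕ+)))
  refine himg.subset ?_
  rintro (α : List ℕ+) ⟨hbk, hlen⟩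
  refine ⟨α.map (fun k : ℕ+ =>
      if h : (k : ℕ) ≤ b then (⟨(k : ℕ) - 1, by omega⟩ : Fin (b + 1)) else 0), ?_, ?_⟩
  · simpa using hlen
  · rw [List.map_map]
    conv_rhs => rw [← List.map_id α]
    refine List.map_congr_left fun k hk => ?_
    have hk' := hbk k hk
    have hk1 : 0 < (k : ℕ) := k.2
    simp only [Function.comp_apply, dif_pos hk', id_eq]
    have : (k : ℕ) - 1 + 1 = (k : ℕ) := by omega
    exact PNat.coe_injective this

end Lub

/-- Proposition `pt-seq` (2): for each strictly `⊑`-increasing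
sequence of finite proof trees in `𝓡^?`, the least upper bound is an infinite,
well-formed proof tree. -/
theorem statement14 {C : Type u} (S : BigStep C) (hBP : S.BP) (τs : ℕ → PTree C)
    (hpt : ∀ n : ℕ, (τs n).Finite ∧ (τs n).IsProofTree S)
    (hmono : ∀ n : ℕ, PTree.LE (τs n) (τs (n + 1)) ∧ τs n ≠ τs (n + 1))
    (τ : PTree C)
    (hub : ∀ n : ℕ, PTree.LE (τs n) τ)
    (hlub : ∀ τ' : PTree C, (∀ n : ℕ, PTree.LE (τs n) τ') → PTree.LE τ τ') :
    ¬ τ.Finite ∧ τ.WellFormed ∧ τ.IsProofTree S := by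
  classical
  have hm : ∀ n, (τs n).LE (τs (n + 1)) := fun n => (hmono n).1
  have hr : (τs 0).label [] ≠ none := (τs 0).root_def
  have hτU : τ.LE (Utree τs hr) := hlub _ (Utree_ub hm hr)
  -- the label of τ is the pointwise limit
  have hlab : τ.label = ulabel τs := by
    funext α
    rcases Option.eq_none_or_eq_some (τ.label α) with h0 | ⟨p, hp⟩
    · rw [h0]
      rcases Option.eq_none_or_eq_some (ulabel τs α) with h1 | ⟨q, hq⟩
      · exact h1.symm
      · obtain ⟨m, hmq⟩ := ulabel_exists hq
        obtain ⟨p', hp', -, -⟩ := hub m α q hmq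
        rw [hp'] at h0; cases h0
    · obtain ⟨q, hq, hcq, hfr⟩ := hτU α p hp
      rw [hp]
      rcases hu : p.2 with _ | r
      · obtain ⟨m, hmq⟩ := ulabel_exists hq
        rcases hqu : q.2 with _ | r'
        · rw [show ulabel τs α = (Utree τs hr).label α from rfl, hq]
          exact congrArg some (Prod.ext hcq (hu.trans hqu.symm))
        · obtain ⟨p'', hp'', -, hfr''⟩ := hub m α q hmq
          have := hfr'' (by rw [hqu]; simp) []
          rw [List.append_nil, hmq, hp] at this
          obtain rfl := Option.some.inj this
          rw [hu] at hqu; cases hqu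
      · have := hfr (by rw [hu]; simp) []
        rw [List.append_nil, hp] at this
        exact this
  -- pointwise convergence of the sequence to τ
  have hconv : ∀ α, ∃ N, ∀ m, N ≤ m → (τs m).label α = τ.label α := by
    intro α
    rcases Option.eq_none_or_eq_some (τ.label α) with h0 | ⟨p, hp⟩
    · refine ⟨0, fun m _ => ?_⟩
      rw [h0]
      rcases Option.eq_none_or_eq_some ((τs m).label α) with h1 | ⟨q, hq⟩
      · exact h1
      · obtain ⟨p', hp', -, -⟩ := hub m α q hq
        rw [hp'] at h0; cases h0
    · have hu : ulabel τs α = some p := by rw [← hlab]; exact hp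
      obtain ⟨n, hn⟩ := ulabel_exists hu
      refine ⟨n, fun m hnm => ?_⟩
      rcases hres : p.2 with _ | r
      · obtain ⟨q, hq, hcq, -⟩ := le_chain hm hnm α p hn
        have hu' : ulabel τs α = some (p.1, none) := by
          rw [hu]; exact congrArg some (Prod.ext rfl hres)
        have hqn : q.2 = none := ulabel_res_none hu' m q hq
        rw [hq, hp]
        exact congrArg some (Prod.ext hcq.symm (hqn.trans hres.symm))
      · have := frozen hm hnm hn (by rw [hres]; simp) []
        rw [List.append_nil] at this
        rw [this, hn, hp]
  -- τ is not finite
  have hNF : ¬ τ.Finite := by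
    intro hfin
    choose Nf hNf using hconv
    set N := hfin.toFinset.sup Nf with hN
    have heq : τs N = τs (N + 1) := by
      apply ptree_ext
      funext α
      by_cases hα : τ.label α = none
      · have h1 : ∀ m, (τs m).label α = none := by
          intro m
          rcases Option.eq_none_or_eq_some ((τs m).label α) with h1 | ⟨q, hq⟩
          · exact h1
          · obtain ⟨p', hp', -, -⟩ := hub m α q hq
            rw [hp'] at hα; cases hα
        rw [h1 N, h1 (N + 1)]
      · have hmem : α ∈ hfin.toFinset := hfin.mem_toFinset.mpr hα
        have hle : Nf α ≤ N := Finset.le_sup hmem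
        rw [hNf α N hle, hNf α (N + 1) (by omega)]
    exact (hmono N).2 heq
  obtain ⟨b, hb⟩ := hBP
  -- children indices are bounded in each τs n
  have hchildb : ∀ (n : ℕ) (α : List ℕ+) (k : ℕ+),
      (τs n).label (α ++ [k]) ≠ none → (k : ℕ) ≤ b := by
    intro n α k h
    have hα := (τs n).closed α k h
    obtain ⟨p, hp⟩ := Option.ne_none_iff_exists'.mp hα
    obtain ⟨prems, hur, hch⟩ := (hpt n).2 α p hp
    rw [hch k] at h
    have hlt : (k : ℕ) - 1 < prems.length := by
      by_contra hge
      rw [List.getElem?_eq_none (le_of_not_gt hge)] at h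
      exact h rfl
    have hpl := urule_len hb hur
    have hk1 : 0 < (k : ℕ) := k.2
    omega
  have hτchildb : ∀ (α : List ℕ+) (k : ℕ+), τ.label (α ++ [k]) ≠ none → (k : ℕ) ≤ b := by
    intro α k h
    obtain ⟨p, hp⟩ := Option.ne_none_iff_exists'.mp h
    rw [hlab] at hp
    obtain ⟨n, hn⟩ := ulabel_exists hp
    exact hchildb n α k (by rw [hn]; simp)
  -- entries of addresses in τ are bounded
  have hbd : ∀ α : List ℕ+, τ.label α ≠ none → ∀ k ∈ α, (k : ℕ) ≤ b := by
    intro α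
    induction α using List.reverseRecOn with
    | nil => simp
    | append_singleton β k ih =>
      intro h k' hk'
      have hβ := prefix_ne_none τ [k] β h
      rcases List.mem_append.mp hk' with h' | h'
      · exact ih hβ k' h'
      · rw [List.mem_singleton.mp h']
        exact hτchildb β k h
  have hshort : ∀ n : ℕ, {α : List ℕ+ | τ.label α ≠ none ∧ α.length ≤ n}.Finite := by
    intro n
    refine (finite_bounded_lists b n).subset ?_
    rintro α ⟨h1, h2⟩
    exact ⟨hbd α h1, h2⟩
  -- τ is a proof tree
  have hPT : τ.IsProofTree S := by
    intro α p hp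
    have hu : ulabel τs α = some p := by rw [← hlab]; exact hp
    obtain ⟨n, hn⟩ := ulabel_exists hu
    rcases hres : p.2 with _ | r
    · -- unknown result: use a sufficiently late stage
      choose Nf hNf using hconv
      set N := max (Nf α)
        ((Finset.range b).sup fun i => Nf (α ++ [⟨i + 1, Nat.succ_pos i⟩])) with hNdef
      have hαN : (τs N).label α = some p := by
        rw [hNf α N (le_max_left _ _)]; exact hp
      obtain ⟨prems, hur, hch⟩ := (hpt N).2 α p hαN
      refine ⟨prems, hres ▸ hur, fun k => ?_⟩
      by_cases hkb : (k : ℕ) ≤ b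
      · have hk1 : 0 < (k : ℕ) := k.2
        have hkeq : (⟨(k : ℕ) - 1 + 1, Nat.succ_pos _⟩ : ℕ+) = k :=
          PNat.coe_injective (show (k : ℕ) - 1 + 1 = (k : ℕ) by omega)
        have hle : Nf (α ++ [k]) ≤ N := by
          refine le_trans ?_ (le_max_right _ _)
          rw [← hkeq]
          have hklt : (k : ℕ) - 1 < b := by omega
          exact Finset.le_sup (f := fun i => Nf (α ++ [⟨i + 1, Nat.succ_pos i⟩]))
            (b := (k : ℕ) - 1) (Finset.mem_range.mpr hklt)
        rw [← hNf (α ++ [k]) N hle]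
        exact hch k
      · have h1 : prems[(k : ℕ) - 1]? = none := by
          refine List.getElem?_eq_none ?_
          have := urule_len hb hur
          omega
        rw [h1]
        rcases Option.eq_none_or_eq_some (τ.label (α ++ [k])) with h2 | ⟨q, hq⟩
        · exact h2
        · exact absurd (hτchildb α k (by rw [hq]; simp)) hkb
    · -- known result: the subtree is frozen at stage n
      obtain ⟨prems, hur, hch⟩ := (hpt n).2 α p hn
      refine ⟨prems, hres ▸ hur, fun k => ?_⟩
      obtain ⟨q, hq, -, hfr⟩ := hub n α p hn
      have := hfr (by rw [hres]; simp) [k]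
      rw [← this]
      exact hch k
  -- subtrees at complete judgments are finite
  have hWF2 : ∀ (α : List ℕ+) (c r : C), τ.label α = some (c, some r) →
      {β : List ℕ+ | τ.label (α ++ β) ≠ none}.Finite := by
    intro α c r hp
    have hu : ulabel τs α = some (c, some r) := by rw [← hlab]; exact hp
    obtain ⟨n, hn⟩ := ulabel_exists hu
    obtain ⟨q, hq, -, hfr⟩ := hub n α _ hn
    have hfr' := hfr (by simp)
    have hsub : {β : List ℕ+ | τ.label (α ++ β) ≠ none} ⊆
        (fun β => α ++ β) ⁻¹' {γ : List ℕ+ | (τs n).label γ ≠ none} := by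
      intro β hβ
      simp only [Set.mem_preimage, Set.mem_setOf_eq]
      rw [hfr' β]
      exact hβ
    have hinj : Function.Injective (fun β : List ℕ+ => α ++ β) :=
      fun β γ h => List.append_cancel_left h
    exact ((hpt n).1.preimage hinj.injOn).subset hsub
  refine ⟨hNF, ⟨?_, fun α c r hp => hWF2 α c r hp⟩, hPT⟩
  -- at every level there is an incomplete judgment
  intro n
  by_contra hno
  push_neg at hno
  apply hNF
  have hDn : {α : List ℕ+ | τ.label α ≠ none ∧ α.length = n}.Finite :=
    (hshort n).subset fun α ⟨h1, h2⟩ => ⟨h1, le_of_eq h2⟩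
  have hbig : {γ : List ℕ+ | τ.label γ ≠ none} ⊆
      {α : List ℕ+ | τ.label α ≠ none ∧ α.length ≤ n} ∪
      ⋃ α ∈ {α : List ℕ+ | τ.label α ≠ none ∧ α.length = n},
        (fun β => α ++ β) '' {β : List ℕ+ | τ.label (α ++ β) ≠ none} := by
    intro γ hγ
    by_cases hlen : γ.length ≤ n
    · exact Or.inl ⟨hγ, hlen⟩
    · right
      have htk : τ.label (γ.take n) ≠ none :=
        prefix_ne_none τ (γ.drop n) (γ.take n)
          (by rw [List.take_append_drop]; exact hγ)
      have hlen' : (γ.take n).length = n := by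
        rw [List.length_take]; omega
      refine Set.mem_biUnion (⟨htk, hlen'⟩ : _ ∧ _) ⟨γ.drop n, ?_, List.take_append_drop n γ⟩
      show τ.label (γ.take n ++ γ.drop n) ≠ none
      rw [List.take_append_drop]
      exact hγ
  refine Set.Finite.subset (Set.Finite.union (hshort n) (Set.Finite.biUnion hDn ?_)) hbig
  rintro α ⟨h1, h2⟩
  obtain ⟨⟨c, u⟩, hpcu⟩ := Option.ne_none_iff_exists'.mp h1
  rcases u with _ | r
  · exact absurd hpcu (by have := hno α c h2; exact this)
  · exact (hWF2 α c r hpcu).image _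

end BigStepMeta
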